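/- The unique solution (a,b,c,d) of the linear system a + b + c + d = 1, b/2 + c + (3/2)d = 1/2, b/24 + c/3 + (7/8)d = 1/8, b/720 + (2/45)c + (61/240)d = 1/48 is (a,b,c,d) = (13/45, 21/45, 9/45, 2/45). Consequently, for a C^8 solution v of the heat equation v_t = (σ²/2)v_xx with constant σ and v^n := v(nΔt,·), one has v^{n+1} = (13/45)v^n + (7/15)S⁰_{Δt}v^n + (1/5)S⁰_{Δt}S⁰_{Δt}v^n + (2/45)S⁰_{Δt}S⁰_{Δt}S⁰_{Δt}v^n + O(Δt⁴) in L^∞. -/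

import Mathlib

open scoped Nat
lemma taylor_err (n : ℕ) (d : ℕ → ℝ → ℝ)
    (hd : ∀ k, k ≤ n → ∀ x, HasDerivAt (d k) (d (k+1) x) x)
    (M : ℝ) (hM : ∀ x, |d (n+1) x| ≤ M) (a b : ℝ) :
    |d 0 b - ∑ k ∈ Finset.range (n+1), d k a * (b - a)^k / (k ! : ℝ)| ≤ M * |b - a|^(n+1) := by
  have hM0 : 0 ≤ M := le_trans (abs_nonneg _) (hM a)
  set ph : ℝ → ℝ := fun s => ∑ k ∈ Finset.range (n+1), d k s * (b - s)^k / (k ! : ℝ) with hph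
  set Bk : ℕ → ℝ → ℝ := fun k s => d k s * ((k : ℝ) * (b - s)^(k-1)) / (k ! : ℝ) with hBk
  have hphd : ∀ s, HasDerivAt ph (d (n+1) s * (b - s)^n / (n ! : ℝ)) s := by
    intro s
    have hterm : ∀ k ∈ Finset.range (n+1),
        HasDerivAt (fun s => d k s * (b - s)^k / (k ! : ℝ)) (Bk (k+1) s - Bk k s) s := by
      intro k hk
      rw [Finset.mem_range] at hk
      have h1 : HasDerivAt (fun s : ℝ => b - s) (-1) s := by
        simpa using (hasDerivAt_id s).const_sub b
      have h2 : HasDerivAt (fun s : ℝ => (b - s)^k) ((k : ℝ) * (b - s)^(k-1) * (-1)) s := h1.pow k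
      have h3 := ((hd k (by omega) s).mul h2).div_const ((k ! : ℝ))
      convert h3 using 1
      iterate 3 rfl
      simp only [hBk, Nat.factorial_succ, Nat.cast_mul]
      have hkf : (k ! : ℝ) ≠ 0 := by positivity
      push_cast
      field_simp
      ring
    have hsum := HasDerivAt.fun_sum hterm
    have : ∑ k ∈ Finset.range (n+1), (Bk (k+1) s - Bk k s) = Bk (n+1) s - Bk 0 s :=
      Finset.sum_range_sub (fun k => Bk k s) (n+1)
    rw [this] at hsum
    have : Bk (n+1) s - Bk 0 s = d (n+1) s * (b - s)^n / (n ! : ℝ) := by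
      simp only [hBk, Nat.factorial_succ, Nat.cast_mul]
      have hnf : (n ! : ℝ) ≠ 0 := by positivity
      push_cast
      field_simp
      ring
    rwa [this] at hsum
  have hphb : ph b = d 0 b := by
    simp only [hph]
    rw [Finset.sum_eq_single 0]
    · simp
    · intro k _ hk
      rw [sub_self, zero_pow hk]
      ring
    · simp
  -- mean value on segment
  have hconv : Convex ℝ (Set.uIcc a b) := convex_uIcc a b
  have hbound : ∀ s ∈ Set.uIcc a b, ‖d (n+1) s * (b - s)^n / (n ! : ℝ)‖ ≤ M * |b - a|^n := by
    intro s hs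
    have h1 : |b - s| ≤ |b - a| := by
      rw [Set.uIcc_eq_union] at hs
      rcases hs with hs | hs <;> rw [Set.mem_Icc] at hs <;>
        rw [abs_sub_le_iff] <;> constructor <;> cases abs_cases (b - a) <;> linarith
    have hnf : (1 : ℝ) ≤ (n ! : ℝ) := by exact_mod_cast Nat.one_le_iff_ne_zero.mpr n.factorial_ne_zero
    rw [Real.norm_eq_abs, abs_div, abs_mul, abs_pow]
    calc |d (n+1) s| * |b - s|^n / |(n ! : ℝ)| ≤ |d (n+1) s| * |b - s|^n / 1 := by
          apply div_le_div_of_nonneg_left ?_ ?_ ?_ <;> first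
            | positivity
            | (rw [abs_of_nonneg (by positivity)]; exact hnf)
      _ = |d (n+1) s| * |b - s|^n := by ring
      _ ≤ M * |b - a|^n := by
          apply mul_le_mul (hM s) (pow_le_pow_left₀ (abs_nonneg _) h1 n) (by positivity) hM0
  have := hconv.norm_image_sub_le_of_norm_hasDerivWithin_le
    (fun s hs => (hphd s).hasDerivWithinAt) hbound Set.left_mem_uIcc Set.right_mem_uIcc
  rw [Real.norm_eq_abs, hphb] at this
  calc |d 0 b - ph a| ≤ M * |b - a|^n * ‖b - a‖ := this
    _ = M * |b - a|^(n+1) := by rw [Real.norm_eq_abs, pow_succ]; ring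

lemma commute_deriv {f G : ℝ × ℝ → ℝ} (hf : ContDiff ℝ 2 f)
    (hG : ∀ p : ℝ × ℝ, HasDerivAt (fun s => f (s, p.2)) (G p) p.1) (t x : ℝ) :
    HasDerivAt (fun s => deriv (fun y => f (s, y)) x) (deriv (fun y => G (t, y)) x) t := by
  have hdf : Differentiable ℝ f := hf.differentiable two_ne_zero
  have hf' : ContDiff ℝ 1 (fderiv ℝ f) := hf.fderiv_right (by norm_num)
  have hdf' : Differentiable ℝ (fderiv ℝ f) := hf'.differentiable one_ne_zero
  have hlineT : ∀ s y : ℝ, HasDerivAt (fun s' => f (s', y)) (fderiv ℝ f (s, y) ((1:ℝ), (0:ℝ))) s := by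
    intro s y
    have h1 : HasDerivAt (fun s' : ℝ => (s', y)) ((1:ℝ), (0:ℝ)) s :=
      (hasDerivAt_id s).prodMk (hasDerivAt_const s y)
    exact (hdf (s, y)).hasFDerivAt.comp_hasDerivAt s h1
  have hlineX : ∀ s y : ℝ, HasDerivAt (fun y' => f (s, y')) (fderiv ℝ f (s, y) ((0:ℝ), (1:ℝ))) y := by
    intro s y
    have h1 : HasDerivAt (fun y' : ℝ => (s, y')) ((0:ℝ), (1:ℝ)) y :=
      (hasDerivAt_const y s).prodMk (hasDerivAt_id y)
    exact (hdf (s, y)).hasFDerivAt.comp_hasDerivAt y h1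
  have hGeq : ∀ p : ℝ × ℝ, G p = fderiv ℝ f p ((1:ℝ), (0:ℝ)) := by
    intro p
    have := hlineT p.1 p.2
    exact (hG p).unique this
  -- second derivative along the slice s ↦ fderiv f (s,x)
  have hsnd : ∀ (p : ℝ × ℝ) (w : ℝ × ℝ),
      HasDerivAt (fun s : ℝ => fderiv ℝ f (s, x) w) (fderiv ℝ (fderiv ℝ f) (t, x) ((1:ℝ),(0:ℝ)) w) t := by
    intro p w
    have h1 : HasDerivAt (fun s : ℝ => (s, x)) ((1:ℝ), (0:ℝ)) t :=
      (hasDerivAt_id t).prodMk (hasDerivAt_const t x)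
    have h2 : HasDerivAt (fun s : ℝ => fderiv ℝ f (s, x)) (fderiv ℝ (fderiv ℝ f) (t, x) ((1:ℝ),(0:ℝ))) t :=
      (hdf' (t, x)).hasFDerivAt.comp_hasDerivAt t h1
    simpa using h2.clm_apply (hasDerivAt_const t w)
  have hsymm : fderiv ℝ (fderiv ℝ f) (t, x) ((1:ℝ),(0:ℝ)) ((0:ℝ),(1:ℝ))
      = fderiv ℝ (fderiv ℝ f) (t, x) ((0:ℝ),(1:ℝ)) ((1:ℝ),(0:ℝ)) :=
    second_derivative_symmetric (fun y => (hdf y).hasFDerivAt) ((hdf' (t, x)).hasFDerivAt) _ _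
  have hXsnd : HasDerivAt (fun y : ℝ => fderiv ℝ f (t, y) ((1:ℝ),(0:ℝ)))
      (fderiv ℝ (fderiv ℝ f) (t, x) ((0:ℝ),(1:ℝ)) ((1:ℝ),(0:ℝ))) x := by
    have h1 : HasDerivAt (fun y' : ℝ => (t, y')) ((0:ℝ), (1:ℝ)) x :=
      (hasDerivAt_const x t).prodMk (hasDerivAt_id x)
    have h2 : HasDerivAt (fun y : ℝ => fderiv ℝ f (t, y)) (fderiv ℝ (fderiv ℝ f) (t, x) ((0:ℝ),(1:ℝ))) x :=
      (hdf' (t, x)).hasFDerivAt.comp_hasDerivAt x h1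
    simpa using h2.clm_apply (hasDerivAt_const x ((1:ℝ),(0:ℝ)))
  have e1 : (fun s => deriv (fun y => f (s, y)) x) = fun s => fderiv ℝ f (s, x) ((0:ℝ),(1:ℝ)) := by
    funext s; exact (hlineX s x).deriv
  have e2 : deriv (fun y => G (t, y)) x = fderiv ℝ (fderiv ℝ f) (t, x) ((1:ℝ),(0:ℝ)) ((0:ℝ),(1:ℝ)) := by
    have : (fun y => G (t, y)) = fun y => fderiv ℝ f (t, y) ((1:ℝ),(0:ℝ)) := by
      funext y; exact hGeq (t, y)
    rw [this, hXsnd.deriv, hsymm]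
  rw [e1, e2]
  exact hsnd (t, x) _

lemma smooth_D {v : ℝ → ℝ → ℝ} (hv : ContDiff ℝ 8 (fun p : ℝ × ℝ => v p.1 p.2)) :
    ∀ j, j ≤ 8 → ContDiff ℝ ((8 - j : ℕ) : ℕ∞) (fun p : ℝ × ℝ => iteratedDeriv j (v p.1) p.2) := by
  intro j
  induction j with
  | zero =>
    intro _
    simpa [iteratedDeriv_zero] using hv
  | succ j ih =>
    intro hj
    have hD := ih (by omega)
    have h1 : (1 : ℕ∞) ≤ ((8 - j : ℕ) : ℕ∞) := by
      have : (1 : ℕ) ≤ 8 - j := by omega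
      exact_mod_cast this
    have hdiff : Differentiable ℝ (fun p : ℝ × ℝ => iteratedDeriv j (v p.1) p.2) :=
      hD.differentiable (by exact_mod_cast (by omega : 8 - j ≠ 0))
    have heq : (fun p : ℝ × ℝ => iteratedDeriv (j+1) (v p.1) p.2)
        = fun p : ℝ × ℝ =>
          fderiv ℝ (fun q : ℝ × ℝ => iteratedDeriv j (v q.1) q.2) p ((0:ℝ), (1:ℝ)) := by
      funext p
      rw [iteratedDeriv_succ]
      have h1 : HasDerivAt (fun y' : ℝ => (p.1, y')) ((0:ℝ), (1:ℝ)) p.2 :=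
        (hasDerivAt_const p.2 p.1).prodMk (hasDerivAt_id p.2)
      have h2 : HasDerivAt (fun y => iteratedDeriv j (v p.1) y)
          (fderiv ℝ (fun q : ℝ × ℝ => iteratedDeriv j (v q.1) q.2) p ((0:ℝ), (1:ℝ))) p.2 := by
        have := (hdiff p).hasFDerivAt.comp_hasDerivAt p.2 h1
        exact this
      exact h2.deriv
    rw [heq]
    have hf' : ContDiff ℝ ((8 - (j+1) : ℕ) : ℕ∞)
        (fderiv ℝ (fun q : ℝ × ℝ => iteratedDeriv j (v q.1) q.2)) := by
      apply hD.fderiv_right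
      have : (8 - (j+1) : ℕ) + 1 ≤ (8 - j : ℕ) := by omega
      exact_mod_cast this
    exact hf'.clm_apply contDiff_const

section
variable {v : ℝ → ℝ → ℝ} {σ : ℝ}

lemma pde_D (hv : ContDiff ℝ 8 (fun p : ℝ × ℝ => v p.1 p.2))
    (hpde : ∀ t x, HasDerivAt (fun s => v s x) (σ ^ 2 / 2 * iteratedDeriv 2 (v t) x) t)
    (smoothD : ∀ j, j ≤ 8 → ContDiff ℝ ((8 - j : ℕ) : ℕ∞)
      (fun p : ℝ × ℝ => iteratedDeriv j (v p.1) p.2))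
    (commuteD : ∀ {f G : ℝ × ℝ → ℝ}, ContDiff ℝ 2 f →
      (∀ p : ℝ × ℝ, HasDerivAt (fun s => f (s, p.2)) (G p) p.1) → ∀ t x : ℝ,
      HasDerivAt (fun s => deriv (fun y => f (s, y)) x) (deriv (fun y => G (t, y)) x) t) :
    ∀ j, j ≤ 6 → ∀ t x, HasDerivAt (fun s => iteratedDeriv j (v s) x)
      (σ ^ 2 / 2 * iteratedDeriv (j + 2) (v t) x) t := by
  have hslice : ∀ t : ℝ, ContDiff ℝ 8 (v t) := by
    intro t
    have : ContDiff ℝ 8 (fun x : ℝ => ((t, x) : ℝ × ℝ)) := contDiff_const.prodMk contDiff_id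
    exact hv.comp this
  intro j
  induction j with
  | zero =>
    intro _ t x
    simpa [iteratedDeriv_zero] using hpde t x
  | succ j ih =>
    intro hj t x
    have hD2 : ContDiff ℝ 2 (fun p : ℝ × ℝ => iteratedDeriv j (v p.1) p.2) := by
      apply (smoothD j (by omega)).of_le
      have h2 : (2 : ℕ) ≤ 8 - j := by omega
      norm_cast
      exact_mod_cast h2
    have hG : ∀ p : ℝ × ℝ, HasDerivAt (fun s => iteratedDeriv j (v s) p.2)
        ((fun q : ℝ × ℝ => σ ^ 2 / 2 * iteratedDeriv (j + 2) (v q.1) q.2) p) p.1 :=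
      fun p => ih (by omega) p.1 p.2
    have hC := commuteD hD2 hG t x
    have e1 : (fun s => deriv (fun y => iteratedDeriv j (v s) y) x)
        = fun s => iteratedDeriv (j+1) (v s) x := by
      funext s; rw [iteratedDeriv_succ]
    have e2 : deriv (fun y => σ ^ 2 / 2 * iteratedDeriv (j + 2) (v t) y) x
        = σ ^ 2 / 2 * iteratedDeriv (j + 1 + 2) (v t) x := by
      have hdiff : DifferentiableAt ℝ (iteratedDeriv (j + 2) (v t)) x :=
        ((hslice t).differentiable_iteratedDeriv (j+2) (by exact_mod_cast by omega : ((j+2:ℕ) : WithTop ℕ∞) < 8)).differentiableAt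
      have h3 : j + 1 + 2 = (j + 2) + 1 := by omega
      rw [deriv_const_mul _ hdiff]
      conv_rhs => rw [h3, iteratedDeriv_succ]
    rw [e1, e2] at hC
    exact hC
end



/-- The two-point semi-Lagrangian operator for the heat equation. -/
noncomputable def S0 (σ h : ℝ) (u : ℝ → ℝ) : ℝ → ℝ :=
  fun x => (1 / 2) * (u (x - σ * Real.sqrt h) + u (x + σ * Real.sqrt h))

/-- Third-order consistency of the SLDG-3 combination for the heat equation
`v_t = (σ²/2) v_xx`: the unique solution of the linear system is
`(a,b,c,d) = (13/45, 21/45, 9/45, 2/45)`, and for a smooth bounded solution `v`,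
`v^{n+1} = (13/45)v^n + (7/15)S⁰v^n + (1/5)(S⁰)²v^n + (2/45)(S⁰)³v^n + O(Δt⁴)`. -/
theorem stmt9 (σ B : ℝ) :
    (∀ a b c d : ℝ,
      (a + b + c + d = 1 ∧ b / 2 + c + (3 / 2) * d = 1 / 2 ∧
        b / 24 + c / 3 + (7 / 8) * d = 1 / 8 ∧
        b / 720 + (2 / 45) * c + (61 / 240) * d = 1 / 48) ↔
      (a = 13 / 45 ∧ b = 21 / 45 ∧ c = 9 / 45 ∧ d = 2 / 45)) ∧
    (∀ v : ℝ → ℝ → ℝ,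
      ContDiff ℝ 8 (fun p : ℝ × ℝ => v p.1 p.2) →
      (∀ t x, HasDerivAt (fun s => v s x) (σ ^ 2 / 2 * iteratedDeriv 2 (v t) x) t) →
      (∀ t x, |iteratedDeriv 8 (v t) x| ≤ B) →
      ∃ C : ℝ, 0 ≤ C ∧ ∀ Δt : ℝ, 0 < Δt → ∀ (n : ℕ) (x : ℝ),
        |v (((n : ℝ) + 1) * Δt) x -
          ((13 / 45) * v ((n : ℝ) * Δt) x +
            (7 / 15) * S0 σ Δt (v ((n : ℝ) * Δt)) x +
            (1 / 5) * S0 σ Δt (S0 σ Δt (v ((n : ℝ) * Δt))) x +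
            (2 / 45) * S0 σ Δt (S0 σ Δt (S0 σ Δt (v ((n : ℝ) * Δt)))) x)| ≤
          C * Δt ^ 4) := by
  constructor
  · intro a b c d
    constructor
    · rintro ⟨h1, h2, h3, h4⟩
      refine ⟨by linarith, by linarith, by linarith, by linarith⟩
    · rintro ⟨rfl, rfl, rfl, rfl⟩
      norm_num
  intro v hv hpde hB
  have hB0 : (0 : ℝ) ≤ B := le_trans (abs_nonneg _) (hB 0 0)
  refine ⟨B * σ ^ 8 * 100, by positivity, ?_⟩
  intro Δt hΔt n x
  set t : ℝ := (n : ℝ) * Δt with ht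
  set u : ℝ → ℝ := v t with hu
  set s : ℝ := σ * Real.sqrt Δt with hs
  have hu8 : ContDiff ℝ 8 u := by
    have : ContDiff ℝ 8 (fun y : ℝ => ((t, y) : ℝ × ℝ)) := contDiff_const.prodMk contDiff_id
    exact hv.comp this
  -- spatial Taylor expansion
  set P : ℝ → ℝ := fun e => ∑ k ∈ Finset.range 8, iteratedDeriv k u x * e ^ k / (k ! : ℝ)
    with hPdef
  have hE : ∀ e : ℝ, |u (x + e) - P e| ≤ B * |e| ^ 8 := by
    intro e
    have hd : ∀ k, k ≤ 7 → ∀ y : ℝ,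
        HasDerivAt (iteratedDeriv k u) (iteratedDeriv (k + 1) u y) y := by
      intro k hk y
      have hdiff : DifferentiableAt ℝ (iteratedDeriv k u) y :=
        (hu8.differentiable_iteratedDeriv k (by exact_mod_cast by omega : ((k : ℕ) : WithTop ℕ∞) < 8)).differentiableAt
      have : iteratedDeriv (k + 1) u y = deriv (iteratedDeriv k u) y := by
        rw [iteratedDeriv_succ]
      rw [this]
      exact hdiff.hasDerivAt
    have hM : ∀ y : ℝ, |iteratedDeriv 8 u y| ≤ B := fun y => hB t y
    have := taylor_err 7 (fun k => iteratedDeriv k u) hd B hM x (x + e)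
    simpa [add_sub_cancel_left, hPdef] using this
  -- time Taylor expansion
  have hD := pde_D hv hpde (smooth_D hv) (fun {f G} hf hG t x => commute_deriv hf hG t x)
  set Q : ℝ := ∑ m ∈ Finset.range 4,
      (σ ^ 2 / 2) ^ m * iteratedDeriv (2 * m) u x * Δt ^ m / (m ! : ℝ) with hQdef
  have hT : |v (((n : ℝ) + 1) * Δt) x - Q| ≤ σ ^ 8 / 16 * B * Δt ^ 4 := by
    have hd : ∀ m, m ≤ 3 → ∀ r : ℝ,
        HasDerivAt (fun sr => (σ ^ 2 / 2) ^ m * iteratedDeriv (2 * m) (v sr) x)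
          ((σ ^ 2 / 2) ^ (m + 1) * iteratedDeriv (2 * (m + 1)) (v r) x) r := by
      intro m hm r
      have h := (hD (2 * m) (by omega) r x).const_mul ((σ ^ 2 / 2) ^ m)
      have e : (σ ^ 2 / 2) ^ (m + 1) * iteratedDeriv (2 * (m + 1)) (v r) x
          = (σ ^ 2 / 2) ^ m * (σ ^ 2 / 2 * iteratedDeriv (2 * m + 2) (v r) x) := by
        rw [show 2 * (m + 1) = 2 * m + 2 from by ring]
        ring
      rw [e]
      exact h
    have hM : ∀ r : ℝ, |(σ ^ 2 / 2) ^ 4 * iteratedDeriv (2 * 4) (v r) x| ≤ (σ ^ 2 / 2) ^ 4 * B := by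
      intro r
      rw [abs_mul, abs_of_nonneg (by positivity : (0:ℝ) ≤ (σ ^ 2 / 2) ^ 4)]
      exact mul_le_mul_of_nonneg_left (by simpa using hB r x) (by positivity)
    have h := taylor_err 3 (fun m sr => (σ ^ 2 / 2) ^ m * iteratedDeriv (2 * m) (v sr) x)
      hd ((σ ^ 2 / 2) ^ 4 * B) hM t (((n : ℝ) + 1) * Δt)
    have hba : ((n : ℝ) + 1) * Δt - t = Δt := by rw [ht]; ring
    rw [hba, abs_of_pos hΔt] at h
    norm_num [iteratedDeriv_zero] at h
    rw [← hu] at h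
    rw [hQdef]
    refine le_trans ?_ (le_of_eq (show (σ ^ 2 / 2) ^ 4 * B * Δt ^ 4 = σ ^ 8 / 16 * B * Δt ^ 4 from by ring))
    convert h using 2
  -- powers of sqrt
  have hs2 : s ^ 2 = σ ^ 2 * Δt := by
    rw [hs, mul_pow, Real.sq_sqrt hΔt.le]
  have hs8 : ∀ c : ℝ, |c * s| ^ 8 = c ^ 8 * (σ ^ 8 * Δt ^ 4) := by
    intro c
    have : |c * s| ^ 8 = (c * s) ^ 8 := Even.pow_abs ⟨4, by norm_num⟩ _
    rw [this]
    have : (c * s) ^ 8 = c ^ 8 * (s ^ 2) ^ 4 := by ring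
    rw [this, hs2]
    ring
  -- unfold the S0 compositions
  have hS1 : S0 σ Δt u x = 1 / 2 * (u (x + -s) + u (x + s)) := by
    simp only [S0, ← hs]
    rw [show x - s = x + -s from by ring]
  have hS2 : S0 σ Δt (S0 σ Δt u) x
      = 1 / 4 * (u (x + -(2 * s)) + 2 * u x + u (x + 2 * s)) := by
    simp only [S0, ← hs]
    rw [show x - s - s = x + -(2 * s) from by ring, show x - s + s = x from by ring,
      show x + s - s = x from by ring, show x + s + s = x + 2 * s from by ring]
    ring
  have hS3 : S0 σ Δt (S0 σ Δt (S0 σ Δt u)) x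
      = 1 / 8 * (u (x + -(3 * s)) + 3 * u (x + -s) + 3 * u (x + s) + u (x + 3 * s)) := by
    simp only [S0, ← hs]
    rw [show x - s - s - s = x + -(3 * s) from by ring,
      show x - s - s + s = x + -s from by ring,
      show x - s + s - s = x + -s from by ring,
      show x + s - s - s = x + -s from by ring,
      show x - s + s + s = x + s from by ring,
      show x + s - s + s = x + s from by ring,
      show x + s + s - s = x + s from by ring,
      show x + s + s + s = x + 3 * s from by ring]
    ring
  -- the polynomial identity
  have Hpoly : Q = 13 / 45 * u x
      + 7 / 15 * (1 / 2 * (P (-s) + P s))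
      + 1 / 5 * (1 / 4 * (P (-(2 * s)) + 2 * u x + P (2 * s)))
      + 2 / 45 * (1 / 8 * (P (-(3 * s)) + 3 * P (-s) + 3 * P s + P (3 * s))) := by
    rw [hQdef, hPdef]
    have hux : iteratedDeriv 0 u x = u x := by rw [iteratedDeriv_zero]
    norm_num [Finset.sum_range_succ, Nat.factorial, hux]
    linear_combination (-(iteratedDeriv 2 u x) / 2 - iteratedDeriv 4 u x * (s ^ 2 + σ ^ 2 * Δt) / 8
      - iteratedDeriv 6 u x * (s ^ 4 + s ^ 2 * σ ^ 2 * Δt + σ ^ 4 * Δt ^ 2) / 48) * hs2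
  -- remainders
  have h1m := hE (-s); have h1p := hE s
  have h2m := hE (-(2 * s)); have h2p := hE (2 * s)
  have h3m := hE (-(3 * s)); have h3p := hE (3 * s)
  rw [show -s = (-1 : ℝ) * s from by ring, hs8] at h1m
  rw [show s = (1 : ℝ) * s from by ring, hs8] at h1p
  rw [show -(2 * s) = (-2 : ℝ) * s from by ring, hs8] at h2m
  rw [hs8] at h2p h3p
  rw [show -(3 * s) = (-3 : ℝ) * s from by ring, hs8] at h3m
  norm_num at h1m h1p h2m h2p h3m h3p
  clear_value t u s P Q
  -- combine
  rw [hS1, hS2, hS3]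
  have hQT : 13 / 45 * u x
      + 7 / 15 * (1 / 2 * (u (x + -s) + u (x + s)))
      + 1 / 5 * (1 / 4 * (u (x + -(2 * s)) + 2 * u x + u (x + 2 * s)))
      + 2 / 45 * (1 / 8 * (u (x + -(3 * s)) + 3 * u (x + -s) + 3 * u (x + s) + u (x + 3 * s)))
      = Q + 1 / 4 * ((u (x + -s) - P (-s)) + (u (x + s) - P s))
          + 1 / 20 * ((u (x + -(2 * s)) - P (-(2 * s))) + (u (x + 2 * s) - P (2 * s)))
          + 1 / 180 * ((u (x + -(3 * s)) - P (-(3 * s))) + (u (x + 3 * s) - P (3 * s))) := by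
    linear_combination (-1 : ℝ) * Hpoly
  rw [hQT]
  have a1m := abs_le.mp h1m; have a1p := abs_le.mp h1p
  have a2m := abs_le.mp h2m; have a2p := abs_le.mp h2p
  have a3m := abs_le.mp h3m; have a3p := abs_le.mp h3p
  have aT := abs_le.mp hT
  rw [abs_le]
  constructor
  · obtain ⟨l, _⟩ := aT
    linarith [a1m.1, a1m.2, a1p.1, a1p.2, a2m.1, a2m.2, a2p.1, a2p.2, a3m.1, a3m.2, a3p.1, a3p.2]
  · obtain ⟨_, r⟩ := aT
    linarith [a1m.1, a1m.2, a1p.1, a1p.2, a2m.1, a2m.2, a2p.1, a2p.2, a3m.1, a3m.2, a3p.1, a3p.2]
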